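/- Let r ≥ 1 and α ∈ ℂʳ. Define the holomorphic vector field ξ₀ : ℂʳ → ℂʳ by ξ₀(z) = α − ⟨z, α⟩ z, and for each diagonal matrix u ∈ ℂ^{r×r} with purely imaginary diagonal entries satisfying α_k · u_{kk} = 0 for all k, define ξ_u(z) = z·u (row vector times matrix). Then these fields pairwise commute: [ξ₀, ξ_u] = 0 for every such u, and [ξ_u, ξ_{u'}] = 0 for any two such diagonal matrices u, u'. -/
import Mathlib

section aux

variable {r : ℕ}

/-- `w ↦ w ᵥ* u` as a continuous linear map. -/
noncomputable def vecMulCLM (u : Matrix (Fin r) (Fin r) ℂ) :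
    (Fin r → ℂ) →L[ℂ] (Fin r → ℂ) :=
  LinearMap.toContinuousLinearMap u.vecMulLinear

lemma vecMulCLM_apply (u : Matrix (Fin r) (Fin r) ℂ) (w : Fin r → ℂ) :
    vecMulCLM u w = Matrix.vecMul w u := rfl

lemma hasFDerivAt_vecMul (u : Matrix (Fin r) (Fin r) ℂ) (z : Fin r → ℂ) :
    HasFDerivAt (fun w : Fin r → ℂ => Matrix.vecMul w u) (vecMulCLM u) z :=
  (vecMulCLM u).hasFDerivAt

/-- `w ↦ ∑ j, w j * conj (α j)` as a continuous linear map. -/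
noncomputable def gCLM (α : Fin r → ℂ) : (Fin r → ℂ) →L[ℂ] ℂ :=
  LinearMap.toContinuousLinearMap
    { toFun := fun w => ∑ j, w j * (starRingEnd ℂ) (α j)
      map_add' := by
        intro x y
        simp [add_mul, Finset.sum_add_distrib]
      map_smul' := by
        intro c x
        simp [Finset.mul_sum, mul_assoc] }

lemma gCLM_apply (α : Fin r → ℂ) (w : Fin r → ℂ) :
    gCLM α w = ∑ j, w j * (starRingEnd ℂ) (α j) := rfl

lemma hasFDerivAt_xi0 (α : Fin r → ℂ) (z : Fin r → ℂ) :
    HasFDerivAt (fun w : Fin r → ℂ => α - (∑ j, w j * (starRingEnd ℂ) (α j)) • w)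
      (-(gCLM α z • ContinuousLinearMap.id ℂ (Fin r → ℂ) + (gCLM α).smulRight z)) z := by
  have h : HasFDerivAt (fun w : Fin r → ℂ => (∑ j, w j * (starRingEnd ℂ) (α j)) • w)
      (gCLM α z • ContinuousLinearMap.id ℂ (Fin r → ℂ) + (gCLM α).smulRight z) z := by
    simpa [gCLM_apply] using ((gCLM α).hasFDerivAt (x := z)).smul (hasFDerivAt_id z)
  simpa using (hasFDerivAt_const α z).sub h

end aux

/-- Let `α ∈ ℂʳ`, let `ξ₀(z) = α − ⟨z,α⟩z`, and for each diagonal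
matrix `u` with purely imaginary diagonal entries satisfying `α_k u_{kk} = 0` for
all `k`, let `ξ_u(z) = z·u`. Then these holomorphic vector fields pairwise commute:
`[ξ₀, ξ_u] = 0` and `[ξ_u, ξ_{u'}] = 0`, where `[X,Y](z) = (DY)_z(X z) − (DX)_z(Y z)`. -/
theorem stmt_5 {r : ℕ} (hr : 1 ≤ r) (α : Fin r → ℂ) :
    (∀ u : Matrix (Fin r) (Fin r) ℂ, u.IsDiag → (∀ i, (u i i).re = 0) →
      (∀ i, α i * u i i = 0) →
      ∀ z : Fin r → ℂ,
        fderiv ℂ (fun w : Fin r → ℂ => Matrix.vecMul w u) z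
            ((fun w : Fin r → ℂ => α - (∑ j, w j * (starRingEnd ℂ) (α j)) • w) z) -
          fderiv ℂ (fun w : Fin r → ℂ => α - (∑ j, w j * (starRingEnd ℂ) (α j)) • w) z
            (Matrix.vecMul z u) = 0) ∧
    (∀ u u' : Matrix (Fin r) (Fin r) ℂ, u.IsDiag → u'.IsDiag →
      (∀ i, (u i i).re = 0) → (∀ i, (u' i i).re = 0) →
      (∀ i, α i * u i i = 0) → (∀ i, α i * u' i i = 0) →
      ∀ z : Fin r → ℂ,
        fderiv ℂ (fun w : Fin r → ℂ => Matrix.vecMul w u') z (Matrix.vecMul z u) -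
          fderiv ℂ (fun w : Fin r → ℂ => Matrix.vecMul w u) z (Matrix.vecMul z u') = 0) := by
  constructor
  · intro u hdiag him hau z
    rw [(hasFDerivAt_vecMul u z).fderiv, (hasFDerivAt_xi0 α z).fderiv]
    have hvecα : Matrix.vecMul α u = 0 := by
      funext k
      simp only [Matrix.vecMul, dotProduct, Pi.zero_apply]
      rw [Finset.sum_eq_zero]
      intro j _
      rcases eq_or_ne j k with rfl | hjk
      · exact hau j
      · rw [hdiag hjk, mul_zero]
    have hzuj : ∀ j, Matrix.vecMul z u j = z j * u j j := by
      intro j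
      simp only [Matrix.vecMul, dotProduct]
      rw [Finset.sum_eq_single j]
      · intro i _ hij
        rw [hdiag hij, mul_zero]
      · intro h; exact absurd (Finset.mem_univ j) h
    have hg : gCLM α (Matrix.vecMul z u) = 0 := by
      rw [gCLM_apply]
      apply Finset.sum_eq_zero
      intro j _
      have hcu : (starRingEnd ℂ) (α j) * u j j = 0 := by
        have h1 : (starRingEnd ℂ) (α j * u j j) = 0 := by rw [hau j]; simp
        have h2 : (starRingEnd ℂ) (u j j) = - u j j := by
          apply Complex.ext <;> simp [him j]
        rw [map_mul, h2, mul_neg, neg_eq_zero] at h1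
        exact h1
      rw [mul_comm ((starRingEnd ℂ) (α j)) (u j j)] at hcu
      rw [hzuj j, mul_assoc, hcu, mul_zero]
    have hsmul : Matrix.vecMul ((∑ j, z j * (starRingEnd ℂ) (α j)) • z) u
        = (∑ j, z j * (starRingEnd ℂ) (α j)) • Matrix.vecMul z u := by
      funext k
      simp [Matrix.vecMul, dotProduct, Finset.mul_sum, mul_assoc]
    simp only [ContinuousLinearMap.neg_apply, ContinuousLinearMap.add_apply,
      ContinuousLinearMap.smul_apply, ContinuousLinearMap.id_apply,
      ContinuousLinearMap.smulRight_apply, vecMulCLM_apply, hg]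
    rw [Matrix.sub_vecMul, hvecα, hsmul]
    have hgz : gCLM α z = ∑ j, z j * (starRingEnd ℂ) (α j) := rfl
    rw [hgz]
    simp
  · intro u u' hd hd' _ _ _ _ z
    rw [(hasFDerivAt_vecMul u' z).fderiv, (hasFDerivAt_vecMul u z).fderiv]
    simp only [vecMulCLM_apply, Matrix.vecMul_vecMul]
    have hcomm : u * u' = u' * u := by
      apply Matrix.ext; intro i k
      simp only [Matrix.mul_apply]
      apply Finset.sum_congr rfl
      intro j _
      rcases eq_or_ne i j with rfl | hij
      · rcases eq_or_ne i k with rfl | hik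
        · ring
        · rw [hd hik, hd' hik, mul_zero, mul_zero]
      · rw [hd hij, hd' hij, zero_mul, zero_mul]
    rw [sub_eq_zero, hcomm]
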